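/- Let G be a graph with unit eigenvectors v₁, v₂ for the two largest eigenvalues μ₁ ≥ μ₂ ≥ 0 of A_G, and let K be any symmetric matrix satisfying xᵀ K x ≥ 0 for all entrywise-nonnegative x. Then μ₁² (v₁∘v₁)ᵀK(v₁∘v₁) + μ₂² (v₂∘v₂)ᵀK(v₂∘v₂) + 2μ₁μ₂ (v₁∘v₁)ᵀK(v₂∘v₂) + 4μ₁μ₂ (v₁∘v₂)ᵀK(v₁∘v₂) ≥ 0, provided v₁ can be chosen with nonnegative entries in the expansion (i.e., this holds by applying the hypothesis to x± = (√μ₁ v₁ ± √μ₂ v₂)∘(√μ₁ v₁ ± √μ₂ v₂)). -/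
import Mathlib


open Matrix Finset SimpleGraph

variable {V : Type*} [Fintype V] [DecidableEq V]

set_option linter.unusedSectionVars false

lemma adjH (G : SimpleGraph V) [DecidableRel G.Adj] : (G.adjMatrix ℝ).IsHermitian := by
  unfold Matrix.IsHermitian
  rw [conjTranspose_eq_transpose_of_trivial]
  exact G.transpose_adjMatrix

/-- `graphEig G k` : the (k+1)-st largest eigenvalue (with multiplicity) of the adjacency
matrix of `G`. -/
noncomputable def graphEig (G : SimpleGraph V) [DecidableRel G.Adj] (k : ℕ) : ℝ :=
  ((Finset.univ.val.map (adjH G).eigenvalues).sort (· ≥ ·)).getD k 0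

set_option maxHeartbeats 1000000 in
theorem quadratic_form_combination_nonneg (G : SimpleGraph V) [DecidableRel G.Adj]
    (v₁ v₂ : V → ℝ)
    (h1 : G.adjMatrix ℝ *ᵥ v₁ = graphEig G 0 • v₁)
    (h2 : G.adjMatrix ℝ *ᵥ v₂ = graphEig G 1 • v₂)
    (hn1 : v₁ ⬝ᵥ v₁ = 1) (hn2 : v₂ ⬝ᵥ v₂ = 1) (ho : v₁ ⬝ᵥ v₂ = 0)
    (hμ : 0 ≤ graphEig G 1)
    (K : Matrix V V ℝ) (hKs : K.IsSymm)
    (hKpos : ∀ x : V → ℝ, (∀ i, 0 ≤ x i) → 0 ≤ x ⬝ᵥ (K *ᵥ x))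
    (hv₁ : ∀ i, 0 ≤ v₁ i) :
    0 ≤ (graphEig G 0) ^ 2 * ((v₁ * v₁) ⬝ᵥ (K *ᵥ (v₁ * v₁)))
        + (graphEig G 1) ^ 2 * ((v₂ * v₂) ⬝ᵥ (K *ᵥ (v₂ * v₂)))
        + 2 * graphEig G 0 * graphEig G 1 * ((v₁ * v₁) ⬝ᵥ (K *ᵥ (v₂ * v₂)))
        + 4 * graphEig G 0 * graphEig G 1 * ((v₁ * v₂) ⬝ᵥ (K *ᵥ (v₁ * v₂))) := by
  set μ₁ := graphEig G 0 with hμ₁def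
  set μ₂ := graphEig G 1 with hμ₂def
  have hμ1 : 0 ≤ μ₁ := by
    have hA : v₁ ⬝ᵥ (G.adjMatrix ℝ *ᵥ v₁) = μ₁ := by
      rw [h1, dotProduct_smul, smul_eq_mul, hn1, mul_one]
    rw [← hA]
    apply Finset.sum_nonneg
    intro i _
    apply mul_nonneg (hv₁ i)
    apply Finset.sum_nonneg
    intro j _
    apply mul_nonneg _ (hv₁ j)
    by_cases h : G.Adj i j <;> simp [h]
  set a := Real.sqrt μ₁ with hadef
  set b := Real.sqrt μ₂ with hbdef
  have ha : a * a = μ₁ := Real.mul_self_sqrt hμ1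
  have hb : b * b = μ₂ := Real.mul_self_sqrt hμ
  have hBsymm : ∀ x y : V → ℝ, x ⬝ᵥ (K *ᵥ y) = y ⬝ᵥ (K *ᵥ x) := by
    intro x y
    rw [dotProduct_mulVec, dotProduct_comm, ← mulVec_transpose, hKs.eq]
  have hxp : (a • v₁ + b • v₂) * (a • v₁ + b • v₂)
      = μ₁ • (v₁ * v₁) + μ₂ • (v₂ * v₂) + (2 * a * b) • (v₁ * v₂) := by
    funext i
    simp only [Pi.mul_apply, Pi.add_apply, Pi.smul_apply, smul_eq_mul]
    nlinarith [ha, hb]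
  have hxm : (a • v₁ - b • v₂) * (a • v₁ - b • v₂)
      = μ₁ • (v₁ * v₁) + μ₂ • (v₂ * v₂) - (2 * a * b) • (v₁ * v₂) := by
    funext i
    simp only [Pi.mul_apply, Pi.sub_apply, Pi.add_apply, Pi.smul_apply, smul_eq_mul]
    nlinarith [ha, hb]
  have hp : 0 ≤ ((a • v₁ + b • v₂) * (a • v₁ + b • v₂)) ⬝ᵥ
      (K *ᵥ ((a • v₁ + b • v₂) * (a • v₁ + b • v₂))) :=
    hKpos _ (fun i => mul_self_nonneg _)
  have hm : 0 ≤ ((a • v₁ - b • v₂) * (a • v₁ - b • v₂)) ⬝ᵥ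
      (K *ᵥ ((a • v₁ - b • v₂) * (a • v₁ - b • v₂))) :=
    hKpos _ (fun i => mul_self_nonneg _)
  rw [hxp] at hp
  rw [hxm] at hm
  simp only [add_dotProduct, sub_dotProduct, smul_dotProduct, mulVec_add, mulVec_sub,
    mulVec_smul, dotProduct_add, dotProduct_sub, dotProduct_smul, smul_eq_mul] at hp hm
  have e1 := hBsymm (v₂ * v₂) (v₁ * v₁)
  have e2 := hBsymm (v₁ * v₂) (v₁ * v₁)
  have e3 := hBsymm (v₁ * v₂) (v₂ * v₂)
  rw [e1] at hp hm
  have hab2 : (2 * a * b) * (2 * a * b) * ((v₁ * v₂) ⬝ᵥ (K *ᵥ (v₁ * v₂)))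
      = 4 * μ₁ * μ₂ * ((v₁ * v₂) ⬝ᵥ (K *ᵥ (v₁ * v₂))) := by
    have : (2 * a * b) * (2 * a * b) = 4 * μ₁ * μ₂ := by nlinarith [ha, hb]
    rw [this]
  nlinarith [hp, hm, hab2]
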